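/- Define the 2d×2d anomalous Green's function 𝐆(z) := [[G^{hp}(z), G^{hh}(z)],[G^{pp}(z), G^{ph}(z)]] and the 2d×2d Hermitian block matrix 𝐡 := [[h, Δ],[−conj(Δ), −hᵀ]]. Then for every admissible z at which 𝐆(z) is invertible, the anomalous self-energy 𝚺(z) := z·I_{2d} − 𝐡 − 𝐆(z)⁻¹ satisfies 𝚺_{ij}(z) = 0 unless both the row index i and the column index j lie in {1,…,p} ∪ {d+1,…,d+p}; i.e., 𝚺(z) vanishes outside the four p×p fragment blocks. -/

import Mathlib

open scoped InnerProductSpace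
open ContinuousLinearMap

set_option linter.unusedSectionVars false
set_option linter.unusedVariables false
set_option maxHeartbeats 1000000
section AuxScalar
variable {V : Type*} [NormedAddCommGroup V] [InnerProductSpace ℂ V] [FiniteDimensional ℂ V]
variable (Φ : V) (K : V →L[ℂ] V)

lemma aux_inner_K_left (hsa : adjoint K = K) (hKΦ : K Φ = 0) (S : V →L[ℂ] V) :
    ⟪Φ, ((K * S) Φ)⟫_ℂ = 0 := by
  have : (K * S) Φ = K (S Φ) := rfl
  rw [this, ← adjoint_inner_left, hsa, hKΦ, inner_zero_left]

lemma aux_inner_K_right (hKΦ : K Φ = 0) (S : V →L[ℂ] V) :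
    ⟪Φ, ((S * K) Φ)⟫_ℂ = 0 := by
  have : (S * K) Φ = S (K Φ) := rfl
  rw [this, hKΦ, map_zero, inner_zero_right]

lemma aux_smul_inner (z : ℂ) (X R Y : V →L[ℂ] V) :
    z * ⟪Φ, ((X * R * Y) Φ)⟫_ℂ = ⟪Φ, ((X * (z • R) * Y) Φ)⟫_ℂ := by
  have : X * (z • R) * Y = z • (X * R * Y) := by
    simp [mul_smul_comm, smul_mul_assoc]
  rw [this]
  simp [inner_smul_right]

/-- row version, Rm side: commutator lands on the left factor. -/
lemma aux_rowA (hsa : adjoint K = K) (hKΦ : K Φ = 0) (z : ℂ) (Rm X Y : V →L[ℂ] V)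
    (hRm : z • Rm = 1 + K * Rm) :
    z * ⟪Φ, ((X * Rm * Y) Φ)⟫_ℂ
      = ⟪Φ, ((X * Y) Φ)⟫_ℂ + ⟪Φ, (((X * K - K * X) * Rm * Y) Φ)⟫_ℂ := by
  rw [aux_smul_inner, hRm]
  have : X * (1 + K * Rm) * Y
      = X * Y + ((X * K - K * X) * Rm * Y + K * (X * (Rm * Y))) := by noncomm_ring
  rw [this]
  simp only [ContinuousLinearMap.add_apply, ContinuousLinearMap.sub_apply,
    inner_add_right, inner_sub_right, aux_inner_K_left Φ K hsa hKΦ]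
  ring

/-- row version, Rp side. -/
lemma aux_rowB (hsa : adjoint K = K) (hKΦ : K Φ = 0) (z : ℂ) (Rp X Y : V →L[ℂ] V)
    (hRp : z • Rp = 1 - Rp * K) :
    z * ⟪Φ, ((Y * Rp * X) Φ)⟫_ℂ
      = ⟪Φ, ((Y * X) Φ)⟫_ℂ + ⟪Φ, ((Y * Rp * (X * K - K * X)) Φ)⟫_ℂ := by
  rw [aux_smul_inner, hRp]
  have : Y * (1 - Rp * K) * X
      = Y * X + (Y * Rp * (X * K - K * X) - (Y * (Rp * X)) * K) := by noncomm_ring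
  rw [this]
  simp only [ContinuousLinearMap.add_apply, ContinuousLinearMap.sub_apply,
    inner_add_right, inner_sub_right, aux_inner_K_right Φ K hKΦ]
  ring

/-- column version, Rm side: commutator lands on the right factor. -/
lemma aux_colA (hKΦ : K Φ = 0) (z : ℂ) (Rm X Y : V →L[ℂ] V)
    (hRm : z • Rm = 1 + Rm * K) :
    z * ⟪Φ, ((X * Rm * Y) Φ)⟫_ℂ
      = ⟪Φ, ((X * Y) Φ)⟫_ℂ + ⟪Φ, ((X * Rm * (K * Y - Y * K)) Φ)⟫_ℂ := by
  rw [aux_smul_inner, hRm]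
  have : X * (1 + Rm * K) * Y
      = X * Y + (X * Rm * (K * Y - Y * K) + (X * (Rm * Y)) * K) := by noncomm_ring
  rw [this]
  simp only [ContinuousLinearMap.add_apply, ContinuousLinearMap.sub_apply,
    inner_add_right, inner_sub_right, aux_inner_K_right Φ K hKΦ]
  ring

/-- column version, Rp side. -/
lemma aux_colB (hsa : adjoint K = K) (hKΦ : K Φ = 0) (z : ℂ) (Rp X Y : V →L[ℂ] V)
    (hRp : z • Rp = 1 - K * Rp) :
    z * ⟪Φ, ((Y * Rp * X) Φ)⟫_ℂ
      = ⟪Φ, ((Y * X) Φ)⟫_ℂ + ⟪Φ, (((K * Y - Y * K) * Rp * X) Φ)⟫_ℂ := by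
  rw [aux_smul_inner, hRp]
  have : Y * (1 - K * Rp) * X
      = Y * X + ((K * Y - Y * K) * Rp * X - K * (Y * (Rp * X))) := by noncomm_ring
  rw [this]
  simp only [ContinuousLinearMap.add_apply, ContinuousLinearMap.sub_apply,
    inner_add_right, inner_sub_right, aux_inner_K_left Φ K hsa hKΦ]
  ring

end AuxScalar
section AuxComm
variable {V : Type*} [NormedAddCommGroup V] [InnerProductSpace ℂ V] [FiniteDimensional ℂ V]

lemma aux_comm_a
    (d p : ℕ)
    (a : Fin d → (V →L[ℂ] V))
    (hcar1 : ∀ i j : Fin d, a i * a j + a j * a i = 0)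
    (hcar2 : ∀ i j : Fin d,
      a i * adjoint (a j) + adjoint (a j) * a i = if i = j then 1 else 0)
    (h : Matrix (Fin d) (Fin d) ℂ)
    (Δ : Matrix (Fin d) (Fin d) ℂ) (hΔ : Δ.transpose = -Δ)
    (HNA HA : V →L[ℂ] V)
    (hHNA : HNA = ∑ i, ∑ j, h i j • (adjoint (a i) * a j))
    (hHA : HA = (1/2 : ℂ) • ∑ i, ∑ j, Δ i j • (adjoint (a i) * adjoint (a j)))
    (Uop : V →L[ℂ] V)
    (hUcomm : ∀ j : Fin d, p ≤ (j : ℕ) →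
      Uop * a j = a j * Uop ∧ Uop * adjoint (a j) = adjoint (a j) * Uop)
    (H : V →L[ℂ] V) (hHdef : H = HNA + HA + adjoint HA + Uop)
    (i : Fin d) (hi : p ≤ (i : ℕ)) :
    a i * H - H * a i = ∑ l, h i l • a l + ∑ l, Δ i l • adjoint (a l) := by
  -- elementary commutators
  have key1 : ∀ k l, a i * (adjoint (a k) * a l) - (adjoint (a k) * a l) * a i
      = if i = k then a l else 0 := by
    intro k l
    have e : a i * (adjoint (a k) * a l) - (adjoint (a k) * a l) * a i
        = (a i * adjoint (a k) + adjoint (a k) * a i) * a l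
          - adjoint (a k) * (a i * a l + a l * a i) := by noncomm_ring
    rw [e, hcar2, hcar1, mul_zero, sub_zero]
    split <;> simp
  have key2 : ∀ k l, a i * (adjoint (a k) * adjoint (a l))
        - (adjoint (a k) * adjoint (a l)) * a i
      = (if i = k then adjoint (a l) else 0) - (if i = l then adjoint (a k) else 0) := by
    intro k l
    have e : a i * (adjoint (a k) * adjoint (a l)) - (adjoint (a k) * adjoint (a l)) * a i
        = (a i * adjoint (a k) + adjoint (a k) * a i) * adjoint (a l)
          - adjoint (a k) * (a i * adjoint (a l) + adjoint (a l) * a i) := by noncomm_ring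
    rw [e, hcar2, hcar2]
    split <;> split <;> simp
  -- HNA commutator
  have cNA : a i * HNA - HNA * a i = ∑ l, h i l • a l := by
    rw [hHNA]
    rw [Finset.mul_sum, Finset.sum_mul, ← Finset.sum_sub_distrib]
    have : ∀ k ∈ Finset.univ, (a i * ∑ l, h k l • (adjoint (a k) * a l)
        - (∑ l, h k l • (adjoint (a k) * a l)) * a i)
        = ∑ l, (if i = k then h k l • a l else 0) := by
      intro k _
      rw [Finset.mul_sum, Finset.sum_mul, ← Finset.sum_sub_distrib]
      refine Finset.sum_congr rfl fun l _ => ?_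
      rw [mul_smul_comm, smul_mul_assoc, ← smul_sub, key1]
      split <;> simp
    rw [Finset.sum_congr rfl this, Finset.sum_comm]
    simp
  -- HA commutator
  have cA : a i * HA - HA * a i = ∑ l, Δ i l • adjoint (a l) := by
    have hΔ' : ∀ k l : Fin d, Δ k l = -Δ l k := by
      intro k l
      have := congrFun (congrFun hΔ l) k
      simpa [Matrix.transpose_apply] using this
    rw [hHA, smul_mul_assoc, mul_smul_comm, ← smul_sub]
    rw [Finset.mul_sum, Finset.sum_mul, ← Finset.sum_sub_distrib]
    have : ∀ k ∈ Finset.univ, (a i * ∑ l, Δ k l • (adjoint (a k) * adjoint (a l))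
        - (∑ l, Δ k l • (adjoint (a k) * adjoint (a l))) * a i)
        = ∑ l, Δ k l • ((if i = k then adjoint (a l) else 0)
            - (if i = l then adjoint (a k) else 0)) := by
      intro k _
      rw [Finset.mul_sum, Finset.sum_mul, ← Finset.sum_sub_distrib]
      refine Finset.sum_congr rfl fun l _ => ?_
      rw [mul_smul_comm, smul_mul_assoc, ← smul_sub, key2]
    rw [Finset.sum_congr rfl this]
    have split1 : ∑ k, ∑ l, Δ k l • ((if i = k then adjoint (a l) else 0)
          - (if i = l then adjoint (a k) else 0))
        = (∑ l, Δ i l • adjoint (a l)) - (∑ k, Δ k i • adjoint (a k)) := by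
      simp [smul_sub, Finset.sum_sub_distrib, smul_ite, Finset.sum_ite_eq]
    rw [split1]
    have e2 : ∑ k, Δ k i • adjoint (a k) = -∑ l, Δ i l • adjoint (a l) := by
      rw [← Finset.sum_neg_distrib]
      exact Finset.sum_congr rfl fun k _ => by rw [hΔ' k i, neg_smul]
    rw [e2, sub_neg_eq_add, ← two_smul ℂ, smul_smul]
    norm_num
  -- adjoint HA commutator vanishes
  have key3 : ∀ k l : Fin d, a i * (a k * a l) - (a k * a l) * a i = 0 := by
    intro k l
    have e : a i * (a k * a l) - (a k * a l) * a i
        = (a i * a k + a k * a i) * a l - a k * (a i * a l + a l * a i) := by noncomm_ring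
    rw [e, hcar1, hcar1, zero_mul, mul_zero, sub_zero]
  have hstarHA : star HA = star (1/2 : ℂ)
      • ∑ k, ∑ l, star (Δ k l) • (a l * a k) := by
    rw [hHA]
    simp only [star_smul, star_sum, star_mul, ← star_eq_adjoint, star_star]
  have cAdj : a i * adjoint HA - adjoint HA * a i = 0 := by
    rw [← star_eq_adjoint, hstarHA, smul_mul_assoc, mul_smul_comm, ← smul_sub]
    rw [Finset.mul_sum, Finset.sum_mul, ← Finset.sum_sub_distrib]
    have : ∀ k ∈ (Finset.univ : Finset (Fin d)),
        (a i * ∑ l, star (Δ k l) • (a l * a k)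
          - (∑ l, star (Δ k l) • (a l * a k)) * a i) = 0 := by
      intro k _
      rw [Finset.mul_sum, Finset.sum_mul, ← Finset.sum_sub_distrib]
      refine Finset.sum_eq_zero fun l _ => ?_
      rw [mul_smul_comm, smul_mul_assoc, ← smul_sub, key3, smul_zero]
    rw [Finset.sum_congr rfl this]
    simp
  have cU : a i * Uop - Uop * a i = 0 := by
    rw [(hUcomm i hi).1, sub_self]
  have expand : a i * (HNA + HA + adjoint HA + Uop) - (HNA + HA + adjoint HA + Uop) * a i
      = (a i * HNA - HNA * a i) + (a i * HA - HA * a i)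
        + (a i * adjoint HA - adjoint HA * a i) + (a i * Uop - Uop * a i) := by
    noncomm_ring
  rw [hHdef, expand, cNA, cA, cAdj, cU, add_zero, add_zero]
end AuxComm
section AuxSA
variable {V : Type*} [NormedAddCommGroup V] [InnerProductSpace ℂ V] [FiniteDimensional ℂ V]

lemma aux_H_sa (d : ℕ) (a : Fin d → (V →L[ℂ] V))
    (h : Matrix (Fin d) (Fin d) ℂ) (hh : h.IsHermitian)
    (HNA HA : V →L[ℂ] V)
    (hHNA : HNA = ∑ i, ∑ j, h i j • (adjoint (a i) * a j))
    (Uop : V →L[ℂ] V) (hUsa : IsSelfAdjoint Uop)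
    (H : V →L[ℂ] V) (hHdef : H = HNA + HA + adjoint HA + Uop) :
    star H = H := by
  have hNA : star HNA = HNA := by
    rw [hHNA]
    simp only [star_sum, star_smul, star_mul, ← star_eq_adjoint, star_star]
    rw [Finset.sum_comm]
    refine Finset.sum_congr rfl fun i _ => Finset.sum_congr rfl fun j _ => ?_
    rw [hh.apply i j]
  rw [hHdef]
  simp only [star_add, hNA, ← star_eq_adjoint, star_star, hUsa.star_eq]
  abel
end AuxSA

/-- **Sparsity of the anomalous self-energy (Theorem 3.4).**
With `𝐆(z) = [[G^{hp}, G^{hh}],[G^{pp}, G^{ph}]]` and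
`𝐡 = [[h, Δ],[−conj(Δ), −hᵀ]]`, for every admissible `z` at which `𝐆(z)` is
invertible, the anomalous self-energy `𝚺(z) = z·I − 𝐡 − 𝐆(z)⁻¹` vanishes in
every entry whose row or column index lies outside the fragment indices
`{1,…,p} ∪ {d+1,…,d+p}`. -/
theorem anomalous_self_energy_sparsity
    (d p : ℕ) (V : Type*) [NormedAddCommGroup V] [InnerProductSpace ℂ V]
    [FiniteDimensional ℂ V]
    (a : Fin d → (V →L[ℂ] V))
    (hcar1 : ∀ i j : Fin d, a i * a j + a j * a i = 0)
    (hcar2 : ∀ i j : Fin d,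
      a i * adjoint (a j) + adjoint (a j) * a i = if i = j then 1 else 0)
    (h : Matrix (Fin d) (Fin d) ℂ) (hh : h.IsHermitian)
    (Δ : Matrix (Fin d) (Fin d) ℂ) (hΔ : Δ.transpose = -Δ)
    (HNA HA : V →L[ℂ] V)
    (hHNA : HNA = ∑ i, ∑ j, h i j • (adjoint (a i) * a j))
    (hHA : HA = (1/2 : ℂ) • ∑ i, ∑ j, Δ i j • (adjoint (a i) * adjoint (a j)))
    (Uop : V →L[ℂ] V) (hUsa : IsSelfAdjoint Uop)
    (hUcomm : ∀ j : Fin d, p ≤ (j : ℕ) →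
      Uop * a j = a j * Uop ∧ Uop * adjoint (a j) = adjoint (a j) * Uop)
    (H : V →L[ℂ] V) (hHdef : H = HNA + HA + adjoint HA + Uop)
    (Φ : V) (hΦ : ‖Φ‖ = 1) (E : ℝ) (hE : H Φ = (E : ℂ) • Φ)
    (z : ℂ)
    (hz1 : IsUnit (z • (1 : V →L[ℂ] V) - (H - (E : ℂ) • 1)))
    (hz2 : IsUnit (z • (1 : V →L[ℂ] V) + (H - (E : ℂ) • 1)))
    (Ghp Gpp Ghh Gph : Matrix (Fin d) (Fin d) ℂ)
    (hGhp : ∀ i j : Fin d, Ghp i j =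
      ⟪Φ, ((a i * Ring.inverse (z • (1 : V →L[ℂ] V) - (H - (E : ℂ) • 1)) *
          adjoint (a j)) Φ)⟫_ℂ +
      ⟪Φ, ((adjoint (a j) * Ring.inverse (z • (1 : V →L[ℂ] V) + (H - (E : ℂ) • 1)) *
          a i) Φ)⟫_ℂ)
    (hGpp : ∀ i j : Fin d, Gpp i j =
      ⟪Φ, ((adjoint (a i) * Ring.inverse (z • (1 : V →L[ℂ] V) - (H - (E : ℂ) • 1)) *
          adjoint (a j)) Φ)⟫_ℂ +
      ⟪Φ, ((adjoint (a j) * Ring.inverse (z • (1 : V →L[ℂ] V) + (H - (E : ℂ) • 1)) *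
          adjoint (a i)) Φ)⟫_ℂ)
    (hGhh : ∀ i j : Fin d, Ghh i j =
      ⟪Φ, ((a i * Ring.inverse (z • (1 : V →L[ℂ] V) - (H - (E : ℂ) • 1)) *
          a j) Φ)⟫_ℂ +
      ⟪Φ, ((a j * Ring.inverse (z • (1 : V →L[ℂ] V) + (H - (E : ℂ) • 1)) *
          a i) Φ)⟫_ℂ)
    (hGph : ∀ i j : Fin d, Gph i j =
      ⟪Φ, ((adjoint (a i) * Ring.inverse (z • (1 : V →L[ℂ] V) - (H - (E : ℂ) • 1)) *
          a j) Φ)⟫_ℂ +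
      ⟪Φ, ((a j * Ring.inverse (z • (1 : V →L[ℂ] V) + (H - (E : ℂ) • 1)) *
          adjoint (a i)) Φ)⟫_ℂ)
    (bG bh : Matrix (Fin d ⊕ Fin d) (Fin d ⊕ Fin d) ℂ)
    (hbG : bG = Matrix.fromBlocks Ghp Ghh Gpp Gph)
    (hbh : bh = Matrix.fromBlocks h Δ (-(Δ.map (starRingEnd ℂ))) (-h.transpose))
    (hbGinv : IsUnit bG.det) :
    ∀ i j : Fin d ⊕ Fin d,
      ¬ (Sum.elim (fun k : Fin d => (k : ℕ) < p) (fun k : Fin d => (k : ℕ) < p) i ∧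
         Sum.elim (fun k : Fin d => (k : ℕ) < p) (fun k : Fin d => (k : ℕ) < p) j) →
      (z • (1 : Matrix (Fin d ⊕ Fin d) (Fin d ⊕ Fin d) ℂ) - bh - bG⁻¹) i j = 0 := by
  classical
  set K : V →L[ℂ] V := H - (E : ℂ) • 1 with hKdef
  set Rm : V →L[ℂ] V := Ring.inverse (z • (1 : V →L[ℂ] V) - K) with hRmdef
  set Rp : V →L[ℂ] V := Ring.inverse (z • (1 : V →L[ℂ] V) + K) with hRpdef
  have hHsa : star H = H := aux_H_sa d a h hh HNA HA hHNA Uop hUsa H hHdef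
  have hKsa : adjoint K = K := by
    rw [← star_eq_adjoint, hKdef, star_sub, hHsa, star_smul, star_one]
    norm_num
  have hKstar : star K = K := by rw [star_eq_adjoint]; exact hKsa
  have hKΦ : K Φ = 0 := by
    rw [hKdef]
    simp [ContinuousLinearMap.sub_apply, hE]
  have hΦ1 : ⟪Φ, Φ⟫_ℂ = 1 := by
    rw [inner_self_eq_norm_sq_to_K, hΦ]; norm_num
  -- resolvent algebra
  have hu1 : (z • (1 : V →L[ℂ] V) - K) * Rm = 1 := Ring.mul_inverse_cancel _ hz1
  have hu1' : Rm * (z • (1 : V →L[ℂ] V) - K) = 1 := Ring.inverse_mul_cancel _ hz1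
  have hu2 : (z • (1 : V →L[ℂ] V) + K) * Rp = 1 := Ring.mul_inverse_cancel _ hz2
  have hu2' : Rp * (z • (1 : V →L[ℂ] V) + K) = 1 := Ring.inverse_mul_cancel _ hz2
  have hRm1 : z • Rm = 1 + K * Rm := by
    have e1 : z • Rm = (z • (1 : V →L[ℂ] V)) * Rm := by rw [smul_mul_assoc, one_mul]
    rw [e1, show (z • (1 : V →L[ℂ] V)) = (z • (1 : V →L[ℂ] V) - K) + K from
      (sub_add_cancel _ _).symm, add_mul, hu1]
  have hRm2 : z • Rm = 1 + Rm * K := by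
    have e1 : z • Rm = Rm * (z • (1 : V →L[ℂ] V)) := by rw [mul_smul_comm, mul_one]
    rw [e1, show (z • (1 : V →L[ℂ] V)) = (z • (1 : V →L[ℂ] V) - K) + K from
      (sub_add_cancel _ _).symm, mul_add, hu1']
  have hRp1 : z • Rp = 1 - K * Rp := by
    have e1 : z • Rp = (z • (1 : V →L[ℂ] V)) * Rp := by rw [smul_mul_assoc, one_mul]
    rw [e1, show (z • (1 : V →L[ℂ] V)) = (z • (1 : V →L[ℂ] V) + K) - K from
      (add_sub_cancel_right _ _).symm, sub_mul, hu2]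
  have hRp2 : z • Rp = 1 - Rp * K := by
    have e1 : z • Rp = Rp * (z • (1 : V →L[ℂ] V)) := by rw [mul_smul_comm, mul_one]
    rw [e1, show (z • (1 : V →L[ℂ] V)) = (z • (1 : V →L[ℂ] V) + K) - K from
      (add_sub_cancel_right _ _).symm, mul_sub, hu2']
  -- the unified family of operators
  set e : Fin d ⊕ Fin d → (V →L[ℂ] V) := Sum.elim a (fun k => adjoint (a k)) with hedef
  have hΔ' : ∀ k l : Fin d, Δ k l = -Δ l k := by
    intro k l
    have := congrFun (congrFun hΔ l) k
    simpa [Matrix.transpose_apply] using this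
  -- unified CAR
  have hecar : ∀ μ ν, e μ * adjoint (e ν) + adjoint (e ν) * e μ
      = if μ = ν then 1 else 0 := by
    rintro (i | i) (j | j)
    · rw [show e (Sum.inl i) = a i from rfl, show e (Sum.inl j) = a j from rfl, hcar2 i j]
      simp [Sum.inl.injEq]
    · rw [show e (Sum.inl i) = a i from rfl,
        show adjoint (e (Sum.inr j)) = a j from adjoint_adjoint (a j)]
      rw [hcar1 i j]
      simp
    · rw [show e (Sum.inr i) = adjoint (a i) from rfl,
        show e (Sum.inl j) = a j from rfl]
      have e1 : adjoint (a i) * adjoint (a j) + adjoint (a j) * adjoint (a i)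
          = star (a j * a i + a i * a j) := by
        simp only [star_add, star_mul, ← star_eq_adjoint]
      rw [e1, show a j * a i + a i * a j = 0 from hcar1 j i, star_zero]
      simp
    · rw [show e (Sum.inr i) = adjoint (a i) from rfl,
        show adjoint (e (Sum.inr j)) = a j from adjoint_adjoint (a j)]
      have e1 := hcar2 j i
      rw [add_comm] at e1
      rw [e1]
      by_cases hc : i = j <;> simp [hc, eq_comm]
  -- unified commutator with H, then with K
  have hcommH : ∀ μ, ¬ Sum.elim (fun k : Fin d => (k : ℕ) < p)
        (fun k : Fin d => (k : ℕ) < p) μ →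
      e μ * H - H * e μ = ∑ κ, bh μ κ • e κ := by
    rintro (i | i) hμ
    · have hi : p ≤ (i : ℕ) := Nat.le_of_not_lt (by simpa using hμ)
      have base := aux_comm_a d p a hcar1 hcar2 h Δ hΔ HNA HA hHNA hHA Uop hUcomm H hHdef i hi
      rw [show e (Sum.inl i) = a i from rfl, base, hbh, Fintype.sum_sum_type]
      simp [hedef]
    · have hi : p ≤ (i : ℕ) := Nat.le_of_not_lt (by simpa using hμ)
      have base := aux_comm_a d p a hcar1 hcar2 h Δ hΔ HNA HA hHNA hHA Uop hUcomm H hHdef i hi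
      have e1 : e (Sum.inr i) * H - H * e (Sum.inr i)
          = -star (a i * H - H * a i) := by
        rw [show e (Sum.inr i) = adjoint (a i) from rfl]
        simp only [star_sub, star_mul, ← star_eq_adjoint, hHsa]
        rw [neg_sub]
      rw [e1, base, star_add, star_sum, star_sum, hbh, Fintype.sum_sum_type]
      simp only [star_smul, star_mul, ← star_eq_adjoint, star_star]
      rw [neg_add]
      rw [show -∑ x : Fin d, star (h i x) • star (a x)
          = ∑ x : Fin d, (-h.transpose) i x • star (a x) by
        rw [← Finset.sum_neg_distrib]
        exact Finset.sum_congr rfl fun l _ => by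
          rw [hh.apply l i, Matrix.neg_apply, Matrix.transpose_apply, neg_smul]]
      rw [show -∑ x : Fin d, star (Δ i x) • a x
          = ∑ x : Fin d, (-(Δ.map (starRingEnd ℂ))) i x • a x by
        rw [← Finset.sum_neg_distrib]
        exact Finset.sum_congr rfl fun l _ => by
          rw [Matrix.neg_apply, Matrix.map_apply, neg_smul]; rfl]
      simp [hedef, ← star_eq_adjoint]
      exact add_comm _ _
  have hcommK : ∀ μ, ¬ Sum.elim (fun k : Fin d => (k : ℕ) < p)
        (fun k : Fin d => (k : ℕ) < p) μ →
      e μ * K - K * e μ = ∑ κ, bh μ κ • e κ := by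
    intro μ hμ
    have e1 : e μ * ((E : ℂ) • (1 : V →L[ℂ] V)) = ((E : ℂ) • 1) * e μ := by
      rw [mul_smul_comm, smul_mul_assoc, mul_one, one_mul]
    have e2 : e μ * K - K * e μ = e μ * H - H * e μ := by
      rw [hKdef, mul_sub, sub_mul, e1]; abel
    rw [e2]; exact hcommH μ hμ
  -- unified Green's function
  have hbGe : ∀ μ ν, bG μ ν
      = ⟪Φ, ((e μ * Rm * adjoint (e ν)) Φ)⟫_ℂ
        + ⟪Φ, ((adjoint (e ν) * Rp * e μ) Φ)⟫_ℂ := by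
    rintro (i | i) (j | j)
    · rw [hbG]
      rw [show (Matrix.fromBlocks Ghp Ghh Gpp Gph) (Sum.inl i) (Sum.inl j) = Ghp i j from rfl]
      rw [hGhp i j]; rfl
    · rw [hbG]
      rw [show (Matrix.fromBlocks Ghp Ghh Gpp Gph) (Sum.inl i) (Sum.inr j) = Ghh i j from rfl]
      rw [hGhh i j]
      rw [show adjoint (e (Sum.inr j)) = a j from adjoint_adjoint (a j)]
      rfl
    · rw [hbG]
      rw [show (Matrix.fromBlocks Ghp Ghh Gpp Gph) (Sum.inr i) (Sum.inl j) = Gpp i j from rfl]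
      rw [hGpp i j]; rfl
    · rw [hbG]
      rw [show (Matrix.fromBlocks Ghp Ghh Gpp Gph) (Sum.inr i) (Sum.inr j) = Gph i j from rfl]
      rw [hGph i j]
      rw [show adjoint (e (Sum.inr j)) = a j from adjoint_adjoint (a j)]
      rfl
  -- hermiticity of bh
  have hermit : ∀ μ ν, star (bh ν μ) = bh μ ν := by
    rintro (i | i) (j | j) <;> rw [hbh] <;>
      simp only [Matrix.fromBlocks_apply₁₁, Matrix.fromBlocks_apply₁₂,
        Matrix.fromBlocks_apply₂₁, Matrix.fromBlocks_apply₂₂, Matrix.neg_apply,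
        Matrix.transpose_apply, Matrix.map_apply, star_neg]
    · exact hh.apply i j
    · rw [show star ((starRingEnd ℂ) (Δ j i)) = Δ j i from star_star _, hΔ' j i, neg_neg]
    · rw [show ((starRingEnd ℂ) (Δ i j)) = star (Δ i j) from rfl, ← star_neg, ← hΔ' j i]
    · rw [← hh.apply j i]
  -- the inner-product delta
  have hdelta : ∀ μ ν, ⟪Φ, ((e μ * adjoint (e ν)) Φ)⟫_ℂ
      + ⟪Φ, ((adjoint (e ν) * e μ) Φ)⟫_ℂ = if μ = ν then 1 else 0 := by
    intro μ ν
    have e1 : (e μ * adjoint (e ν)) Φ + (adjoint (e ν) * e μ) Φ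
        = ((if μ = ν then (1 : V →L[ℂ] V) else 0)) Φ := by
      rw [← ContinuousLinearMap.add_apply, hecar μ ν]
    rw [← inner_add_right, e1]
    split <;> simp [hΦ1, hΦ]
  -- row identity
  have row : ∀ μ, ¬ Sum.elim (fun k : Fin d => (k : ℕ) < p)
        (fun k : Fin d => (k : ℕ) < p) μ → ∀ ν,
      z * bG μ ν = (if μ = ν then 1 else 0) + ∑ κ, bh μ κ * bG κ ν := by
    intro μ hμ ν
    rw [hbGe μ ν, mul_add,
      aux_rowA Φ K hKsa hKΦ z Rm (e μ) (adjoint (e ν)) hRm1,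
      aux_rowB Φ K hKsa hKΦ z Rp (e μ) (adjoint (e ν)) hRp2,
      hcommK μ hμ]
    have hsum : ⟪Φ, (((∑ κ, bh μ κ • e κ) * Rm * adjoint (e ν)) Φ)⟫_ℂ
        + ⟪Φ, ((adjoint (e ν) * Rp * (∑ κ, bh μ κ • e κ)) Φ)⟫_ℂ
        = ∑ κ, bh μ κ * bG κ ν := by
      simp only [Finset.sum_mul, Finset.mul_sum, smul_mul_assoc, mul_smul_comm,
        ContinuousLinearMap.sum_apply, inner_sum, ContinuousLinearMap.smul_apply,
        inner_smul_right]
      rw [← Finset.sum_add_distrib]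
      exact Finset.sum_congr rfl fun κ _ => by rw [hbGe κ ν]; ring
    have hd := hdelta μ ν
    linear_combination hd + hsum
  -- column identity
  have hCadj : ∀ ν, ¬ Sum.elim (fun k : Fin d => (k : ℕ) < p)
        (fun k : Fin d => (k : ℕ) < p) ν →
      K * adjoint (e ν) - adjoint (e ν) * K
        = ∑ κ, star (bh ν κ) • adjoint (e κ) := by
    intro ν hν
    have e1 : K * adjoint (e ν) - adjoint (e ν) * K = star (e ν * K - K * e ν) := by
      simp only [star_sub, star_mul, ← star_eq_adjoint, hKstar]
    rw [e1, hcommK ν hν, star_sum]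
    exact Finset.sum_congr rfl fun κ _ => by
      rw [star_smul, star_eq_adjoint]
  have col : ∀ ν, ¬ Sum.elim (fun k : Fin d => (k : ℕ) < p)
        (fun k : Fin d => (k : ℕ) < p) ν → ∀ μ,
      z * bG μ ν = (if μ = ν then 1 else 0) + ∑ κ, bG μ κ * bh κ ν := by
    intro ν hν μ
    rw [hbGe μ ν, mul_add,
      aux_colA Φ K hKΦ z Rm (e μ) (adjoint (e ν)) hRm2,
      aux_colB Φ K hKsa hKΦ z Rp (e μ) (adjoint (e ν)) hRp1,
      hCadj ν hν]
    have hsum : ⟪Φ, ((e μ * Rm * (∑ κ, star (bh ν κ) • adjoint (e κ))) Φ)⟫_ℂ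
        + ⟪Φ, (((∑ κ, star (bh ν κ) • adjoint (e κ)) * Rp * e μ) Φ)⟫_ℂ
        = ∑ κ, bG μ κ * bh κ ν := by
      simp only [Finset.sum_mul, Finset.mul_sum, smul_mul_assoc, mul_smul_comm,
        ContinuousLinearMap.sum_apply, inner_sum, ContinuousLinearMap.smul_apply,
        inner_smul_right]
      rw [← Finset.sum_add_distrib]
      exact Finset.sum_congr rfl fun κ _ => by rw [hbGe μ κ, hermit κ ν]; ring
    have hd := hdelta μ ν
    linear_combination hd + hsum
  -- matrix-level identities
  have rowM : ∀ μ, ¬ Sum.elim (fun k : Fin d => (k : ℕ) < p)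
        (fun k : Fin d => (k : ℕ) < p) μ → ∀ ν,
      ((z • (1 : Matrix (Fin d ⊕ Fin d) (Fin d ⊕ Fin d) ℂ) - bh) * bG) μ ν
        = (1 : Matrix (Fin d ⊕ Fin d) (Fin d ⊕ Fin d) ℂ) μ ν := by
    intro μ hμ ν
    rw [Matrix.mul_apply]
    have e1 : ∀ κ, (z • (1 : Matrix (Fin d ⊕ Fin d) (Fin d ⊕ Fin d) ℂ) - bh) μ κ * bG κ ν
        = (if μ = κ then z * bG κ ν else 0) - bh μ κ * bG κ ν := by
      intro κ
      by_cases hc : μ = κ <;>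
        simp [Matrix.sub_apply, Matrix.smul_apply, Matrix.one_apply, hc, sub_mul]
    rw [Finset.sum_congr rfl fun κ _ => e1 κ, Finset.sum_sub_distrib, Finset.sum_ite_eq]
    simp only [Finset.mem_univ, if_true]
    rw [row μ hμ ν, Matrix.one_apply]
    ring
  have colM : ∀ ν, ¬ Sum.elim (fun k : Fin d => (k : ℕ) < p)
        (fun k : Fin d => (k : ℕ) < p) ν → ∀ μ,
      (bG * (z • (1 : Matrix (Fin d ⊕ Fin d) (Fin d ⊕ Fin d) ℂ) - bh)) μ ν
        = (1 : Matrix (Fin d ⊕ Fin d) (Fin d ⊕ Fin d) ℂ) μ ν := by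
    intro ν hν μ
    rw [Matrix.mul_apply]
    have e1 : ∀ κ, bG μ κ * (z • (1 : Matrix (Fin d ⊕ Fin d) (Fin d ⊕ Fin d) ℂ) - bh) κ ν
        = (if κ = ν then z * bG μ κ else 0) - bG μ κ * bh κ ν := by
      intro κ
      by_cases hc : κ = ν <;>
        simp [Matrix.sub_apply, Matrix.smul_apply, Matrix.one_apply, hc, mul_sub, mul_comm]
    rw [Finset.sum_congr rfl fun κ _ => e1 κ, Finset.sum_sub_distrib, Finset.sum_ite_eq']
    simp only [Finset.mem_univ, if_true]
    rw [col ν hν μ, Matrix.one_apply]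
    ring
  -- conclusion
  intro i j hij
  have hGinv1 : bG * bG⁻¹ = 1 := Matrix.mul_nonsing_inv bG hbGinv
  have hGinv2 : bG⁻¹ * bG = 1 := Matrix.nonsing_inv_mul bG hbGinv
  by_cases hi : Sum.elim (fun k : Fin d => (k : ℕ) < p) (fun k : Fin d => (k : ℕ) < p) i
  · have hj : ¬ Sum.elim (fun k : Fin d => (k : ℕ) < p) (fun k : Fin d => (k : ℕ) < p) j :=
      fun hj => hij ⟨hi, hj⟩
    have key : z • (1 : Matrix (Fin d ⊕ Fin d) (Fin d ⊕ Fin d) ℂ) - bh - bG⁻¹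
        = bG⁻¹ * (bG * (z • (1 : Matrix (Fin d ⊕ Fin d) (Fin d ⊕ Fin d) ℂ) - bh) - 1) := by
      rw [mul_sub, mul_one, ← mul_assoc, hGinv2, one_mul]
    rw [key, Matrix.mul_apply]
    refine Finset.sum_eq_zero fun κ _ => ?_
    rw [Matrix.sub_apply, colM j hj κ, sub_self, mul_zero]
  · have key : z • (1 : Matrix (Fin d ⊕ Fin d) (Fin d ⊕ Fin d) ℂ) - bh - bG⁻¹
        = ((z • (1 : Matrix (Fin d ⊕ Fin d) (Fin d ⊕ Fin d) ℂ) - bh) * bG - 1) * bG⁻¹ := by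
      rw [sub_mul, one_mul, mul_assoc, hGinv1, mul_one]
    rw [key, Matrix.mul_apply]
    refine Finset.sum_eq_zero fun κ _ => ?_
    rw [Matrix.sub_apply, rowM i hi κ, sub_self, zero_mul]
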